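/- Let ρ be an N×N density matrix. Then the following are equivalent: (1) for all permutations π_l, π_r ∈ S_m, ρ = (1/2)(P_{π_r} ρ P_{π_l}† + P_{π_l} ρ P_{π_r}†); (2) ρ = Π_Sym ρ Π_Sym. -/

import Mathlib

open Matrix ComplexOrder

/-- The permutation matrix `P_π` on the `m`-fold tensor power of `ℂ^n`, indexing
coordinates by functions `f : Fin m → Fin n`, with entries
`(P_π)_{f,g} = 1` if `g = f ∘ π⁻¹` and `0` otherwise. -/
def permMat (n m : ℕ) (π : Equiv.Perm (Fin m)) :
    Matrix (Fin m → Fin n) (Fin m → Fin n) ℂ :=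
  Matrix.of fun f g => if g = f ∘ π.symm then 1 else 0

/-- The symmetriser `Π_Sym = (1/m!) Σ_π P_π`. -/
noncomputable def symmetriser (n m : ℕ) :
    Matrix (Fin m → Fin n) (Fin m → Fin n) ℂ :=
  (m.factorial : ℂ)⁻¹ • ∑ π : Equiv.Perm (Fin m), permMat n m π

lemma permMat_one (n m : ℕ) : permMat n m 1 = 1 := by
  ext f g
  simp [permMat, Matrix.one_apply, eq_comm, Equiv.Perm.one_def]

lemma permMat_mul (n m : ℕ) (π σ : Equiv.Perm (Fin m)) :
    permMat n m π * permMat n m σ = permMat n m (σ * π) := by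
  ext f h
  rw [Matrix.mul_apply]
  simp only [permMat, of_apply]
  rw [Finset.sum_eq_single (f ∘ π.symm)]
  · have : (f ∘ ⇑π.symm) ∘ ⇑σ.symm = f ∘ ⇑(σ * π).symm := by
      ext x
      simp [← Equiv.Perm.inv_def, _root_.mul_inv_rev, Equiv.Perm.mul_apply]
    simp [this]
  · intro g _ hg; simp [hg]
  · simp

lemma permMat_conjTranspose (n m : ℕ) (π : Equiv.Perm (Fin m)) :
    (permMat n m π)ᴴ = permMat n m π⁻¹ := by
  ext f g
  simp only [conjTranspose_apply, permMat, of_apply]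
  have : (f = g ∘ ⇑π.symm) ↔ (g = f ∘ ⇑π⁻¹.symm) := by
    constructor
    · rintro rfl; ext x; simp [Equiv.Perm.inv_def]
    · rintro rfl; ext x; simp [← Equiv.Perm.inv_def]
  rw [if_congr this rfl rfl]
  split <;> simp
lemma sum_permMat_mul (n m : ℕ) (σ : Equiv.Perm (Fin m)) :
    (∑ τ : Equiv.Perm (Fin m), permMat n m τ) * permMat n m σ
      = ∑ τ : Equiv.Perm (Fin m), permMat n m τ := by
  rw [Finset.sum_mul]
  simp_rw [permMat_mul]
  exact Fintype.sum_equiv (Equiv.mulLeft σ) _ _ (fun τ => rfl)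

lemma permMat_mul_sum (n m : ℕ) (σ : Equiv.Perm (Fin m)) :
    permMat n m σ * (∑ τ : Equiv.Perm (Fin m), permMat n m τ)
      = ∑ τ : Equiv.Perm (Fin m), permMat n m τ := by
  rw [Finset.mul_sum]
  simp_rw [permMat_mul]
  exact Fintype.sum_equiv (Equiv.mulRight σ) _ _ (fun τ => rfl)

lemma symmetriser_mul_permMat (n m : ℕ) (σ : Equiv.Perm (Fin m)) :
    symmetriser n m * permMat n m σ = symmetriser n m := by
  rw [symmetriser, smul_mul_assoc, sum_permMat_mul]

lemma permMat_mul_symmetriser (n m : ℕ) (σ : Equiv.Perm (Fin m)) :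
    permMat n m σ * symmetriser n m = symmetriser n m := by
  rw [symmetriser, mul_smul_comm, permMat_mul_sum]

lemma symmetriser_mul_symmetriser (n m : ℕ) :
    symmetriser n m * symmetriser n m = symmetriser n m := by
  nth_rewrite 2 [symmetriser]
  rw [mul_smul_comm, Finset.mul_sum]
  simp_rw [symmetriser_mul_permMat]
  rw [Finset.sum_const, Finset.card_univ, Fintype.card_perm, Fintype.card_fin,
    ← Nat.cast_smul_eq_nsmul ℂ, smul_smul,
    inv_mul_cancel₀ (Nat.cast_ne_zero.mpr m.factorial_ne_zero), one_smul]

lemma half_add_eq {M : Type*} [AddCommGroup M] [Module ℂ M] {X Y : M}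
    (h : X = (2 : ℂ)⁻¹ • (X + Y)) : X = Y := by
  have h2 : (2 : ℂ) • X = X + Y := by
    conv_lhs => rw [h]
    rw [smul_smul, mul_inv_cancel₀ (by norm_num : (2:ℂ) ≠ 0), one_smul]
  rw [two_smul] at h2
  exact add_left_cancel h2

/-- A density matrix `ρ` satisfies `ρ = (1/2)(P_r ρ P_l† + P_l ρ P_r†)` for all
`π_l, π_r ∈ S_m` iff `ρ = Π_Sym ρ Π_Sym`. -/
theorem density_sym_exchangeable_iff (n m : ℕ) (hn : 1 ≤ n) (hm : 1 ≤ m)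
    (ρ : Matrix (Fin m → Fin n) (Fin m → Fin n) ℂ)
    (hρ : ρ.PosSemidef) (htr : ρ.trace = 1) :
    (∀ πl πr : Equiv.Perm (Fin m),
        ρ = (2 : ℂ)⁻¹ •
          (permMat n m πr * ρ * (permMat n m πl)ᴴ + permMat n m πl * ρ * (permMat n m πr)ᴴ)) ↔
      ρ = symmetriser n m * ρ * symmetriser n m := by
  set S : Matrix (Fin m → Fin n) (Fin m → Fin n) ℂ := ∑ π : Equiv.Perm (Fin m), permMat n m π
    with hS
  have hfac : (m.factorial : ℂ) ≠ 0 := Nat.cast_ne_zero.mpr m.factorial_ne_zero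
  constructor
  · intro h
    -- single-permutation form
    have h1 : ∀ π : Equiv.Perm (Fin m),
        ρ = (2 : ℂ)⁻¹ • (permMat n m π * ρ + ρ * permMat n m π⁻¹) := by
      intro π
      have := h 1 π
      simpa [permMat_one, permMat_conjTranspose] using this
    -- sum over all permutations
    have hsum : (m.factorial : ℂ) • ρ = (2 : ℂ)⁻¹ • (S * ρ + ρ * S) := by
      have h2 : ∑ π : Equiv.Perm (Fin m), ρ
          = ∑ π : Equiv.Perm (Fin m),
              (2 : ℂ)⁻¹ • (permMat n m π * ρ + ρ * permMat n m π⁻¹) :=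
        Finset.sum_congr rfl fun π _ => h1 π
      rw [Finset.sum_const, Finset.card_univ, Fintype.card_perm, Fintype.card_fin,
        ← Nat.cast_smul_eq_nsmul ℂ] at h2
      rw [← Finset.smul_sum, Finset.sum_add_distrib, ← Finset.sum_mul, ← Finset.mul_sum] at h2
      have hinv : ∑ π : Equiv.Perm (Fin m), permMat n m π⁻¹ = S :=
        Fintype.sum_equiv (Equiv.inv _) _ _ (fun π => rfl)
      rw [hinv] at h2
      exact h2
    -- average: ρ = 2⁻¹ • (Π ρ + ρ Π)
    have havg : ρ = (2 : ℂ)⁻¹ • (symmetriser n m * ρ + ρ * symmetriser n m) := by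
      calc ρ = ((m.factorial : ℂ)⁻¹ * (m.factorial : ℂ)) • ρ := by
              rw [inv_mul_cancel₀ hfac, one_smul]
        _ = (m.factorial : ℂ)⁻¹ • ((m.factorial : ℂ) • ρ) := (smul_smul _ _ _).symm
        _ = (m.factorial : ℂ)⁻¹ • ((2 : ℂ)⁻¹ • (S * ρ + ρ * S)) := by rw [hsum]
        _ = (2 : ℂ)⁻¹ • (symmetriser n m * ρ + ρ * symmetriser n m) := by
              rw [symmetriser, ← hS, smul_mul_assoc, mul_smul_comm, ← smul_add, smul_comm]
    -- left multiply by symmetriser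
    have hleft : symmetriser n m * ρ = symmetriser n m * ρ * symmetriser n m := by
      apply half_add_eq
      calc symmetriser n m * ρ
          = symmetriser n m * ((2 : ℂ)⁻¹ • (symmetriser n m * ρ + ρ * symmetriser n m)) := by
            rw [← havg]
        _ = (2 : ℂ)⁻¹ • (symmetriser n m * (symmetriser n m * ρ)
              + symmetriser n m * (ρ * symmetriser n m)) := by
            rw [mul_smul_comm, mul_add]
        _ = (2 : ℂ)⁻¹ • (symmetriser n m * ρ + symmetriser n m * ρ * symmetriser n m) := by
            rw [← mul_assoc, symmetriser_mul_symmetriser, ← mul_assoc]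
    have hright : ρ * symmetriser n m = symmetriser n m * ρ * symmetriser n m := by
      apply half_add_eq
      calc ρ * symmetriser n m
          = ((2 : ℂ)⁻¹ • (symmetriser n m * ρ + ρ * symmetriser n m)) * symmetriser n m := by
            rw [← havg]
        _ = (2 : ℂ)⁻¹ • (ρ * symmetriser n m
              + symmetriser n m * ρ * symmetriser n m) := by
            rw [smul_mul_assoc, add_mul, mul_assoc, mul_assoc,
              symmetriser_mul_symmetriser, add_comm]
    have hfin : ρ = (2 : ℂ)⁻¹ • (symmetriser n m * ρ * symmetriser n m
        + symmetriser n m * ρ * symmetriser n m) := by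
      nth_rewrite 2 [← hright]
      nth_rewrite 1 [← hleft]
      exact havg
    calc ρ = (2 : ℂ)⁻¹ • (symmetriser n m * ρ * symmetriser n m
          + symmetriser n m * ρ * symmetriser n m) := hfin
      _ = symmetriser n m * ρ * symmetriser n m := by
          rw [← two_smul ℂ, smul_smul, inv_mul_cancel₀ (by norm_num : (2:ℂ) ≠ 0), one_smul]
  · intro h πl πr
    have key : ∀ a b : Equiv.Perm (Fin m),
        permMat n m a * (symmetriser n m * ρ * symmetriser n m) * (permMat n m b)ᴴ
          = symmetriser n m * ρ * symmetriser n m := by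
      intro a b
      rw [permMat_conjTranspose, ← mul_assoc, ← mul_assoc, permMat_mul_symmetriser,
        mul_assoc, symmetriser_mul_permMat]
    nth_rewrite 2 3 [h]
    rw [key, key, ← h, ← two_smul ℂ, smul_smul,
      inv_mul_cancel₀ (by norm_num : (2:ℂ) ≠ 0), one_smul]
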